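/- arXiv:2508.00276 — 2 statements merged into one kernel-verified Lean document; each statement's English description precedes it below -/
import Mathlib

section
/- Let φ be an E3-CNF formula with m clauses C_1, …, C_m over variables x_1, …, x_n, let y, z_1, z_2 be fresh variables, and let m_1, m_2 ≥ 1 be integers. Let ψ be the CNF formula (with clauses of width 3 or 4) consisting of the clauses C_j ∨ y for every j ∈ [m], together with m_1 copies of ¬y ∨ z_1 ∨ ¬z_2 and m_2 copies of ¬y ∨ ¬z_1 ∨ z_2. Let α_start assign 1 to all of x_1,…,x_n and (y,z_1,z_2) = (1,1,1), and let α_end assign 0 to all of x_1,…,x_n and (y,z_1,z_2) = (1,0,0). Then α_start and α_end satisfy ψ, and if φ is satisfiable then opt_ψ(α_start ↔ α_end) = 1. -/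
/-- An assignment maps each Boolean variable to a truth value. -/
abbrev Assignment (V : Type) := V → Bool

/-- A literal is a variable together with a polarity (`true` = positive);
a clause is a disjunction of literals, represented as the list of its literals
(its width is the length of this list). -/
abbrev Clause (V : Type) := List (V × Bool)

/-- A CNF formula is a conjunction of clauses, represented as a list
(clauses are counted with multiplicity). -/
abbrev CNF (V : Type) := List (Clause V)

/-- An assignment satisfies a clause if it makes at least one literal true. -/
def satClause {V : Type} (α : Assignment V) (C : Clause V) : Bool :=
  C.any fun l => α l.1 == l.2

/-- An assignment satisfies a CNF formula if it satisfies every clause. -/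
def satCNF {V : Type} (α : Assignment V) (φ : CNF V) : Bool :=
  φ.all fun C => satClause α C

/-- The fraction of clauses of `φ` satisfied by `α`. -/
noncomputable def val {V : Type} (φ : CNF V) (α : Assignment V) : ℝ :=
  ((φ.filter fun C => satClause α C).length : ℝ) / (φ.length : ℝ)

/-- The number of clauses of `φ` violated by `α`. -/
def numViol {V : Type} (φ : CNF V) (α : Assignment V) : ℕ :=
  (φ.filter fun C => !satClause α C).length

/-- Two assignments differ on at most one variable. -/
def Adjacent {V : Type} (α β : Assignment V) : Prop :=
  ∀ v w, α v ≠ β v → α w ≠ β w → v = w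

/-- `seq` is a reconfiguration sequence from `s` to `e`: a nonempty finite sequence of
assignments starting at `s`, ending at `e`, in which consecutive assignments differ
on at most one variable. -/
def IsReconfSeq {V : Type} (s e : Assignment V) (seq : List (Assignment V)) : Prop :=
  seq ≠ [] ∧ seq.head? = some s ∧ seq.getLast? = some e ∧ seq.Chain' Adjacent

/-- The value of a reconfiguration sequence: the minimum of `val φ` over its members. -/
noncomputable def seqVal {V : Type} (φ : CNF V) (seq : List (Assignment V)) : ℝ :=
  sInf (val φ '' {α | α ∈ seq})

/-- `opt_φ(s ↔ e)`: the optimal (maximum) value over all reconfiguration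
sequences from `s` to `e`. -/
noncomputable def optVal {V : Type} (φ : CNF V) (s e : Assignment V) : ℝ :=
  sSup (seqVal φ '' {seq | IsReconfSeq s e seq})

section Aux

variable {V : Type}

lemma val_nonneg' (φ : CNF V) (α : Assignment V) : 0 ≤ val φ α := by
  unfold val; positivity

lemma val_le_one' (φ : CNF V) (α : Assignment V) : val φ α ≤ 1 := by
  unfold val
  rcases Nat.eq_zero_or_pos φ.length with h | h
  · simp [h]
  · rw [div_le_one (by exact_mod_cast h)]
    exact_mod_cast List.length_filter_le _ _

lemma val_eq_one' (φ : CNF V) (α : Assignment V) (hne : φ ≠ [])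
    (h : satCNF α φ = true) : val φ α = 1 := by
  unfold val
  rw [List.filter_eq_self.mpr (by simpa [satCNF, List.all_eq_true] using h)]
  rw [div_self]
  have : 0 < φ.length := List.length_pos_iff.mpr hne
  positivity

lemma seqVal_le_one' (φ : CNF V) (seq : List (Assignment V)) (hne : seq ≠ []) :
    seqVal φ seq ≤ 1 := by
  obtain ⟨a, ha⟩ := List.exists_mem_of_ne_nil seq hne
  refine csInf_le_of_le ⟨0, ?_⟩ ⟨a, ha, rfl⟩ (val_le_one' φ a)
  rintro x ⟨b, -, rfl⟩
  exact val_nonneg' φ b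

lemma seqVal_eq_one' (φ : CNF V) (seq : List (Assignment V)) (hne : seq ≠ [])
    (h : ∀ a ∈ seq, val φ a = 1) : seqVal φ seq = 1 := by
  unfold seqVal
  have : val φ '' {α | α ∈ seq} = {1} := by
    apply Set.Subset.antisymm
    · rintro x ⟨b, hb, rfl⟩; exact h b hb
    · rintro x rfl
      obtain ⟨a, ha⟩ := List.exists_mem_of_ne_nil seq hne
      exact ⟨a, ha, h a ha⟩
  rw [this, csInf_singleton]

/-- Hybrid assignment used for the path flipping `x`-variables one at a time. -/
def hyb {n : ℕ} (f g : Fin n → Bool) (t : Fin 3 → Bool) (k : ℕ) :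
    Assignment (Fin n ⊕ Fin 3) :=
  Sum.elim (fun i => if i.val < k then g i else f i) t

lemma hyb_zero {n : ℕ} (f g : Fin n → Bool) (t : Fin 3 → Bool) :
    hyb f g t 0 = Sum.elim f t := by
  funext v; cases v with
  | inl i => simp [hyb]
  | inr j => rfl

lemma hyb_last {n : ℕ} (f g : Fin n → Bool) (t : Fin 3 → Bool) :
    hyb f g t n = Sum.elim g t := by
  funext v; cases v with
  | inl i => simp [hyb, i.isLt]
  | inr j => rfl

lemma hyb_adj {n : ℕ} (f g : Fin n → Bool) (t : Fin 3 → Bool) (k : ℕ) :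
    Adjacent (hyb f g t k) (hyb f g t (k + 1)) := by
  have key : ∀ v, hyb f g t k v ≠ hyb f g t (k + 1) v →
      ∃ hk : k < n, v = Sum.inl ⟨k, hk⟩ := by
    intro v hv
    cases v with
    | inr j => exact absurd rfl hv
    | inl i =>
      by_cases h1 : i.val < k
      · exact absurd (by simp [hyb, h1, Nat.lt_succ_of_lt h1]; intro h; omega) hv
      · by_cases h2 : i.val < k + 1
        · have : i.val = k := by omega
          exact ⟨this ▸ i.isLt, by simp [Fin.ext_iff, this]⟩
        · exact absurd (by simp [hyb, h1, h2]; intro h; omega) hv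
  intro v w hv hw
  obtain ⟨hk, rfl⟩ := key v hv
  obtain ⟨hk', rfl⟩ := key w hw
  rfl

/-- Adjacency for assignments agreeing on the `x`-part and on all but one `inr` index. -/
lemma adj_inr {n : ℕ} (f : Fin n → Bool) (t t' : Fin 3 → Bool) (j : Fin 3)
    (h : ∀ k, k ≠ j → t k = t' k) :
    Adjacent (Sum.elim f t) (Sum.elim f t') := by
  have key : ∀ u, Sum.elim f t u ≠ Sum.elim f t' u → u = Sum.inr j := by
    intro u hu
    cases u with
    | inl i => exact absurd rfl hu
    | inr k =>
      by_cases hk : k = j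
      · rw [hk]
      · exact absurd (by simpa using h k hk) hu
  intro v w hv hw
  rw [key v hv, key w hw]

lemma any_map' {A B : Type} (f : A → B) (l : List A) (p : B → Bool) :
    (l.map f).any p = l.any (p ∘ f) := by
  induction l with
  | nil => rfl
  | cons a l ih => simp [ih]

lemma sat_main_clause_y {n : ℕ} (C : Clause (Fin n)) (β : Assignment (Fin n ⊕ Fin 3))
    (hy : β (Sum.inr 0) = true) :
    satClause β (C.map (fun l => (Sum.inl l.1, l.2)) ++ [(Sum.inr 0, true)]) = true := by
  simp [satClause, hy]

lemma sat_main_clause_x {n : ℕ} (C : Clause (Fin n)) (β : Assignment (Fin n ⊕ Fin 3))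
    (h : satClause (fun i => β (Sum.inl i)) C = true) :
    satClause β (C.map (fun l => (Sum.inl l.1, l.2)) ++ [(Sum.inr 0, true)]) = true := by
  rw [satClause, List.any_append, Bool.or_eq_true]
  left
  rw [any_map']
  exact h

/-- `ψ` is satisfied by any assignment with `y = 1` and `z₁ = z₂`. -/
lemma satPsi_y {n : ℕ} (φ : CNF (Fin n)) (m₁ m₂ : ℕ) (β : Assignment (Fin n ⊕ Fin 3))
    (hy : β (Sum.inr 0) = true) (hz : β (Sum.inr 1) = β (Sum.inr 2)) :
    satCNF β ((φ.map fun C => C.map (fun l => (Sum.inl l.1, l.2)) ++ [(Sum.inr 0, true)])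
        ++ List.replicate m₁ [(Sum.inr 0, false), (Sum.inr 1, true), (Sum.inr 2, false)]
        ++ List.replicate m₂ [(Sum.inr 0, false), (Sum.inr 1, false), (Sum.inr 2, true)])
        = true := by
  rw [satCNF, List.all_eq_true]
  intro C hC
  simp only [List.mem_append, List.mem_map, List.eq_replicate_iff, List.mem_replicate] at hC
  rcases hC with (⟨D, hD, rfl⟩ | h) | h
  · exact sat_main_clause_y D β hy
  · rw [h.2]
    cases h1 : β (Sum.inr 1) <;> simp [satClause, h1, hz ▸ h1]
  · rw [h.2]
    cases h1 : β (Sum.inr 1) <;> simp [satClause, h1, hz ▸ h1]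

/-- `ψ` is satisfied by any assignment with `y = 0` whose `x`-part satisfies `φ`. -/
lemma satPsi_noty {n : ℕ} (φ : CNF (Fin n)) (m₁ m₂ : ℕ) (β : Assignment (Fin n ⊕ Fin 3))
    (hy : β (Sum.inr 0) = false) (hx : satCNF (fun i => β (Sum.inl i)) φ = true) :
    satCNF β ((φ.map fun C => C.map (fun l => (Sum.inl l.1, l.2)) ++ [(Sum.inr 0, true)])
        ++ List.replicate m₁ [(Sum.inr 0, false), (Sum.inr 1, true), (Sum.inr 2, false)]
        ++ List.replicate m₂ [(Sum.inr 0, false), (Sum.inr 1, false), (Sum.inr 2, true)])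
        = true := by
  rw [satCNF, List.all_eq_true] at hx ⊢
  intro C hC
  simp only [List.mem_append, List.mem_map, List.mem_replicate] at hC
  rcases hC with (⟨D, hD, rfl⟩ | h) | h
  · exact sat_main_clause_x D β (hx D hD)
  · rw [h.2]; simp [satClause, hy]
  · rw [h.2]; simp [satClause, hy]

end Aux

/-- Completeness of the reduction to `{3,4}`-SAT Reconfiguration: with
fresh variables `y = inr 0`, `z₁ = inr 1`, `z₂ = inr 2`, the formula `ψ` consists of the
clauses `C_j ∨ y` (for `j ∈ [m]`), `m₁ ≥ 1` copies of `¬y ∨ z₁ ∨ ¬z₂`, and `m₂ ≥ 1` copies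
of `¬y ∨ ¬z₁ ∨ z₂`; `αs` assigns `1` to every variable (so `(y,z₁,z₂) = (1,1,1)`), and `αe`
assigns `0` to every `xᵢ` and `(y,z₁,z₂) = (1,0,0)`. Then `αs` and `αe` satisfy `ψ`, and if
`φ` is satisfiable then `opt_ψ(αs ↔ αe) = 1`. -/
theorem stmt13 {n : ℕ} (φ : CNF (Fin n)) (h3 : ∀ C ∈ φ, C.length = 3)
    (m₁ m₂ : ℕ) (hm₁ : 1 ≤ m₁) (hm₂ : 1 ≤ m₂)
    (ψ : CNF (Fin n ⊕ Fin 3))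
    (hψ : ψ = (φ.map fun C => C.map (fun l => (Sum.inl l.1, l.2)) ++ [(Sum.inr 0, true)])
        ++ List.replicate m₁ [(Sum.inr 0, false), (Sum.inr 1, true), (Sum.inr 2, false)]
        ++ List.replicate m₂ [(Sum.inr 0, false), (Sum.inr 1, false), (Sum.inr 2, true)])
    (αs αe : Assignment (Fin n ⊕ Fin 3))
    (hαs : αs = fun _ => true)
    (hαe : αe = Sum.elim (fun _ => false) fun i => i == 0) :
    satCNF αs ψ ∧ satCNF αe ψ ∧ ((∃ α, satCNF α φ) → optVal ψ αs αe = 1) := by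
  subst hψ hαs hαe
  set Ψ : CNF (Fin n ⊕ Fin 3) :=
      (φ.map fun C => C.map (fun l => (Sum.inl l.1, l.2)) ++ [(Sum.inr 0, true)])
        ++ List.replicate m₁ [(Sum.inr 0, false), (Sum.inr 1, true), (Sum.inr 2, false)]
        ++ List.replicate m₂ [(Sum.inr 0, false), (Sum.inr 1, false), (Sum.inr 2, true)]
      with hΨ
  have hΨne : Ψ ≠ [] := by
    have : 0 < Ψ.length := by
      rw [hΨ]; simp only [List.length_append, List.length_replicate]; omega
    exact List.ne_nil_of_length_pos this
  refine ⟨satPsi_y φ m₁ m₂ _ rfl rfl, satPsi_y φ m₁ m₂ _ rfl rfl, ?_⟩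
  rintro ⟨α, hα⟩
  -- the reconfiguration sequence
  set t1 : Fin 3 → Bool := fun _ => true with ht1
  set t2 : Fin 3 → Bool := fun i => i == 0 with ht2
  set β2 : Assignment (Fin n ⊕ Fin 3) := Sum.elim α ![false, true, true] with hβ2
  set β3 : Assignment (Fin n ⊕ Fin 3) := Sum.elim α ![false, false, true] with hβ3
  set β4 : Assignment (Fin n ⊕ Fin 3) := Sum.elim α ![false, false, false] with hβ4
  set P1 : List (Assignment (Fin n ⊕ Fin 3)) :=
      (List.range (n + 1)).map (hyb (fun _ => true) α t1) with hP1
  set P2 : List (Assignment (Fin n ⊕ Fin 3)) :=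
      (List.range (n + 1)).map (hyb α (fun _ => false) t2) with hP2
  set S : List (Assignment (Fin n ⊕ Fin 3)) := P1 ++ ([β2, β3, β4] ++ P2) with hS
  have hP1ne : P1 ≠ [] := by simp [hP1]
  have hP2ne : P2 ≠ [] := by simp [hP2]
  have hSne : S ≠ [] := by simp [hS, hP1ne]
  have hP1head : P1.head? = some (Sum.elim (fun _ => true) t1) := by
    rw [hP1, List.range_succ_eq_map]
    simp [hyb_zero]
  have hP1last : P1.getLast? = some (Sum.elim α t1) := by
    rw [hP1, List.range_succ, List.map_append, List.map_singleton, List.getLast?_concat, hyb_last]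
  have hP2head : P2.head? = some (Sum.elim α t2) := by
    rw [hP2, List.range_succ_eq_map]
    simp [hyb_zero]
  have hP2last : P2.getLast? = some (Sum.elim (fun _ => false) t2) := by
    rw [hP2, List.range_succ, List.map_append, List.map_singleton, List.getLast?_concat, hyb_last]
  have hxchain : ∀ (f g : Fin n → Bool) (t : Fin 3 → Bool),
      List.Chain' Adjacent ((List.range (n + 1)).map (hyb f g t)) := by
    intro f g t
    unfold List.Chain'
    rw [List.isChain_map]
    exact (List.isChain_range_succ _ n).mpr fun m _ => hyb_adj f g t m
  -- S is a reconfiguration sequence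
  have hreconf : IsReconfSeq (fun _ => true)
      (Sum.elim (fun _ => false) fun i => i == 0) S := by
    refine ⟨hSne, ?_, ?_, ?_⟩
    · rw [hS, List.head?_append, hP1head]
      have : Sum.elim (fun _ => true) t1 = (fun _ => true : Assignment (Fin n ⊕ Fin 3)) := by
        funext v; cases v <;> rfl
      simp [this]
    · rw [hS, List.getLast?_append, List.getLast?_append, hP2last]
      rfl
    · unfold List.Chain'
      rw [hS, List.isChain_append]
      refine ⟨hxchain _ _ _, ?_, ?_⟩
      · rw [List.isChain_append]
        refine ⟨?_, hxchain _ _ _, ?_⟩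
        · refine List.isChain_cons_cons.mpr ⟨?_, List.isChain_cons_cons.mpr ⟨?_, List.isChain_singleton _⟩⟩
          · exact adj_inr α _ _ 1 (by decide)
          · exact adj_inr α _ _ 2 (by decide)
        · intro x hx y hy
          simp only [List.getLast?_cons_cons, List.getLast?_singleton, Option.mem_def,
            Option.some.injEq] at hx
          rw [hP2head, Option.mem_def, Option.some.injEq] at hy
          rw [← hx, ← hy]
          exact adj_inr α _ _ 0 (by decide)
      · intro x hx y hy
        rw [hP1last, Option.mem_def, Option.some.injEq] at hx
        simp only [List.head?_append, List.head?_cons, Option.some_or, Option.mem_def,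
          Option.some.injEq] at hy
        rw [← hx, ← hy]
        exact adj_inr α _ _ 0 (by decide)
  -- every assignment in S satisfies Ψ
  have hsatS : ∀ a ∈ S, satCNF a Ψ = true := by
    intro a ha
    rw [hS] at ha
    simp only [List.mem_append, List.mem_cons, List.mem_singleton, hP1, hP2,
      List.mem_map, List.mem_range, List.mem_nil_iff, or_false] at ha
    rcases ha with ⟨k, -, rfl⟩ | ((rfl | rfl | rfl) | ⟨k, -, rfl⟩)
    · exact satPsi_y φ m₁ m₂ _ rfl rfl
    · exact satPsi_noty φ m₁ m₂ _ rfl hα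
    · exact satPsi_noty φ m₁ m₂ _ rfl hα
    · exact satPsi_noty φ m₁ m₂ _ rfl hα
    · exact satPsi_y φ m₁ m₂ _ rfl rfl
  have hSval : seqVal Ψ S = 1 :=
    seqVal_eq_one' Ψ S hSne fun a ha => val_eq_one' Ψ a hΨne (hsatS a ha)
  -- conclude
  have hmem : (1 : ℝ) ∈ seqVal Ψ ''
      {seq | IsReconfSeq (fun _ => true) (Sum.elim (fun _ => false) fun i => i == 0) seq} :=
    ⟨S, hreconf, hSval⟩
  have hub : ∀ x ∈ seqVal Ψ ''
      {seq | IsReconfSeq (fun _ => true) (Sum.elim (fun _ => false) fun i => i == 0) seq},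
      x ≤ 1 := by
    rintro x ⟨seq, hseq, rfl⟩
    exact seqVal_le_one' Ψ seq hseq.1
  exact le_antisymm (csSup_le ⟨1, hmem⟩ hub) (le_csSup ⟨1, hub⟩ hmem)
end

section
/- Let φ be an E3-CNF formula with m clauses C_1, …, C_m over variables x_1, …, x_n, let y, z_1, z_2, z_3 be fresh variables, and let m_1, m_2, m_3 ≥ 1 be integers. Let ψ be the E4-CNF formula consisting of the clauses C_j ∨ y for every j ∈ [m], together with m_1 copies of ¬y ∨ z_1 ∨ ¬z_2 ∨ ¬z_3, m_2 copies of ¬y ∨ ¬z_1 ∨ z_2 ∨ ¬z_3, and m_3 copies of ¬y ∨ ¬z_1 ∨ ¬z_2 ∨ z_3. Let α_start assign 1 to all of x_1,…,x_n and (y,z_1,z_2,z_3) = (1,1,1,1), and let α_end assign 0 to all of x_1,…,x_n and (y,z_1,z_2,z_3) = (1,0,0,0). Suppose δ > 0 is such that every assignment for φ violates at least δ·m clauses of φ. Then every reconfiguration sequence from α_start to α_end contains an assignment that violates at least min{δ·m, m_1, m_2, m_3} clauses of ψ; in particular, if m_1 = m_2 = m_3 = δ·m (with δ·m an integer), then opt_ψ(α_start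 ↔ α_end) ≤ 1 - δ/(1 + 3δ). -/
lemma numViol_append {V : Type} (A B : CNF V) (α : Assignment V) :
    numViol (A ++ B) α = numViol A α + numViol B α := by
  simp [numViol, List.filter_append]

lemma numViol_replicate {V : Type} (k : ℕ) (c : Clause V) (α : Assignment V) :
    numViol (List.replicate k c) α = if satClause α c then 0 else k := by
  simp only [numViol, List.filter_replicate]
  split <;> simp_all

lemma numViol_map_part {n : ℕ} (φ : CNF (Fin n)) (β : Assignment (Fin n ⊕ Fin 4))
    (hy : β (Sum.inr 0) = false) :
    numViol (φ.map fun C => C.map (fun l => (Sum.inl l.1, l.2)) ++ [(Sum.inr 0, true)]) β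
      = numViol φ (fun v => β (Sum.inl v)) := by
  unfold numViol
  rw [List.filter_map, List.length_map]
  congr 1
  apply List.filter_congr
  intro C hC
  clear hC
  simp only [satClause, List.any_append, List.any_cons, List.any_nil, hy]
  induction C with
  | nil => simp [hy]
  | cons hd tl ih => simp_all

lemma satcount_add_numViol {V : Type} (φ : CNF V) (α : Assignment V) :
    (φ.filter fun C => satClause α C).length + numViol φ α = φ.length := by
  simpa [numViol] using (List.length_eq_length_filter_add (l := φ)
    (fun C => satClause α C)).symm

lemma chain_ivt {A : Type*} (f : A → ℤ) :
    ∀ (seq : List A) (a b : A), seq.Chain' (fun x y => |f x - f y| ≤ 1) →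
      seq.head? = some a → seq.getLast? = some b →
      ∀ t, f b ≤ t → t ≤ f a → ∃ c ∈ seq, f c = t
  | [], a, b, _, ha, _, _, _, _ => by simp at ha
  | [x], a, b, _, ha, hb, t, h1, h2 => by
      simp only [List.head?_cons, Option.some.injEq] at ha
      simp only [List.getLast?_singleton, Option.some.injEq] at hb
      subst ha; subst hb
      exact ⟨x, by simp, le_antisymm h1 h2⟩
  | x :: y :: rest, a, b, hc, ha, hb, t, h1, h2 => by
      simp only [List.head?_cons, Option.some.injEq] at ha
      subst ha
      rcases eq_or_lt_of_le h2 with h | h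
      · exact ⟨x, by simp, h.symm⟩
      · rw [List.Chain', List.isChain_cons_cons] at hc
        have hty : t ≤ f y := by
          have := abs_le.mp hc.1
          omega
        have hb' : (y :: rest).getLast? = some b := by
          rwa [List.getLast?_cons_cons] at hb
        obtain ⟨c, hc', hfc⟩ := chain_ivt f (y :: rest) y b hc.2 rfl hb' t h1 hty
        exact ⟨c, by simp [hc'], hfc⟩

noncomputable def zc (β : Assignment (Fin n ⊕ Fin 4)) : ℤ :=
  (if β (Sum.inr 1) then 1 else 0) + (if β (Sum.inr 2) then 1 else 0) +
    (if β (Sum.inr 3) then 1 else 0)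

lemma adj_zc {n : ℕ} {α β : Assignment (Fin n ⊕ Fin 4)} (h : Adjacent α β) :
    |zc α - zc β| ≤ 1 := by
  rcases eq_or_ne (α (Sum.inr 1)) (β (Sum.inr 1)) with h1 | h1 <;>
  rcases eq_or_ne (α (Sum.inr 2)) (β (Sum.inr 2)) with h2 | h2 <;>
  rcases eq_or_ne (α (Sum.inr 3)) (β (Sum.inr 3)) with h3 | h3
  · simp [zc, h1, h2, h3]
  · simp only [zc, h1, h2]
    cases α (Sum.inr 3) <;> cases β (Sum.inr 3) <;> norm_num
  · simp only [zc, h1, h3]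
    cases α (Sum.inr 2) <;> cases β (Sum.inr 2) <;> norm_num
  · exact absurd (h _ _ h2 h3) (by simp)
  · simp only [zc, h2, h3]
    cases α (Sum.inr 1) <;> cases β (Sum.inr 1) <;> norm_num
  · exact absurd (h _ _ h1 h3) (by simp)
  · exact absurd (h _ _ h1 h2) (by simp)
  · exact absurd (h _ _ h1 h2) (by simp)

/-- Soundness of the reduction to E4-SAT Reconfiguration: with `ψ`, `αs`,
`αe` as in the reduction, if `δ > 0` is such that every assignment for `φ` violates at least
`δ·m` clauses of `φ`, then every reconfiguration sequence from `αs` to `αe` contains an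
assignment violating at least `min {δ·m, m₁, m₂, m₃}` clauses of `ψ`; in particular, if

`m₁ = m₂ = m₃ = δ·m` (so `δ·m` is an integer) then `opt_ψ(αs ↔ αe) ≤ 1 - δ/(1 + 3δ)`. -/
theorem stmt16 {n : ℕ} (φ : CNF (Fin n)) (h3 : ∀ C ∈ φ, C.length = 3)
    (m₁ m₂ m₃ : ℕ) (hm₁ : 1 ≤ m₁) (hm₂ : 1 ≤ m₂) (hm₃ : 1 ≤ m₃)
    (ψ : CNF (Fin n ⊕ Fin 4))
    (hψ : ψ = (φ.map fun C => C.map (fun l => (Sum.inl l.1, l.2)) ++ [(Sum.inr 0, true)])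
        ++ List.replicate m₁
            [(Sum.inr 0, false), (Sum.inr 1, true), (Sum.inr 2, false), (Sum.inr 3, false)]
        ++ List.replicate m₂
            [(Sum.inr 0, false), (Sum.inr 1, false), (Sum.inr 2, true), (Sum.inr 3, false)]
        ++ List.replicate m₃
            [(Sum.inr 0, false), (Sum.inr 1, false), (Sum.inr 2, false), (Sum.inr 3, true)])
    (αs αe : Assignment (Fin n ⊕ Fin 4))
    (hαs : αs = fun _ => true)
    (hαe : αe = Sum.elim (fun _ => false) fun i => i == 0)
    (δ : ℝ) (hδ : 0 < δ)
    (hviol : ∀ α : Assignment (Fin n), δ * (φ.length : ℝ) ≤ (numViol φ α : ℝ)) :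
    (∀ seq, IsReconfSeq αs αe seq →
        ∃ β ∈ seq,
          min (δ * (φ.length : ℝ)) (min (m₁ : ℝ) (min (m₂ : ℝ) (m₃ : ℝ))) ≤
            (numViol ψ β : ℝ)) ∧
      ((m₁ : ℝ) = δ * (φ.length : ℝ) → (m₂ : ℝ) = δ * (φ.length : ℝ) →
        (m₃ : ℝ) = δ * (φ.length : ℝ) →
        optVal ψ αs αe ≤ 1 - δ / (1 + 3 * δ)) := by
  -- abbreviations
  have hpart1 : ∀ seq, IsReconfSeq αs αe seq →
      ∃ β ∈ seq,
        min (δ * (φ.length : ℝ)) (min (m₁ : ℝ) (min (m₂ : ℝ) (m₃ : ℝ))) ≤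
          (numViol ψ β : ℝ) := by
    intro seq hseq
    obtain ⟨hne, hhead, hlast, hchain⟩ := hseq
    by_cases hy : ∃ β ∈ seq, β (Sum.inr 0) = false
    · obtain ⟨β, hβ, hβy⟩ := hy
      refine ⟨β, hβ, ?_⟩
      have h1 : numViol φ (fun v => β (Sum.inl v)) ≤ numViol ψ β := by
        rw [hψ, numViol_append, numViol_append, numViol_append,
          numViol_map_part φ β hβy]
        omega
      calc min (δ * (φ.length : ℝ)) _ ≤ δ * (φ.length : ℝ) := min_le_left _ _
        _ ≤ (numViol φ (fun v => β (Sum.inl v)) : ℝ) := hviol _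
        _ ≤ (numViol ψ β : ℝ) := by exact_mod_cast h1
    · push_neg at hy
      have hivt := chain_ivt zc seq αs αe (hchain.imp fun a b h => adj_zc h)
        hhead hlast 2 (by simp [hαe, zc]) (by simp [hαs, zc])
      obtain ⟨β, hβ, hfβ⟩ := hivt
      have hβy : β (Sum.inr 0) = true := by
        have := hy β hβ
        simpa using this
      refine ⟨β, hβ, ?_⟩
      have hmin : min (δ * (φ.length : ℝ)) (min (m₁ : ℝ) (min (m₂ : ℝ) (m₃ : ℝ)))
          ≤ min (m₁ : ℝ) (min (m₂ : ℝ) (m₃ : ℝ)) := min_le_right _ _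
      cases h1 : β (Sum.inr 1) <;> cases h2 : β (Sum.inr 2) <;> cases h3 : β (Sum.inr 3) <;>
        simp only [zc, h1, h2, h3, if_true, if_false] at hfβ <;> norm_num at hfβ
      -- remaining cases: exactly one of z₁,z₂,z₃ false
      · -- z = (false, true, true): m₁ copies violated
        have hsat : satClause β
            [(Sum.inr 0, false), (Sum.inr 1, true), (Sum.inr 2, false), (Sum.inr 3, false)]
            = false := by simp [satClause, hβy, h1, h2, h3]
        have : m₁ ≤ numViol ψ β := by
          rw [hψ, numViol_append, numViol_append, numViol_append, numViol_replicate, hsat]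
          simp <;> omega
        refine hmin.trans (le_trans (min_le_left _ _) ?_)
        exact_mod_cast this
      · -- z = (true, false, true): m₂ copies violated
        have hsat : satClause β
            [(Sum.inr 0, false), (Sum.inr 1, false), (Sum.inr 2, true), (Sum.inr 3, false)]
            = false := by simp [satClause, hβy, h1, h2, h3]
        have : m₂ ≤ numViol ψ β := by
          rw [hψ, numViol_append, numViol_append, numViol_append, numViol_replicate,
            numViol_replicate, hsat]
          simp <;> omega
        refine hmin.trans (le_trans ((min_le_right _ _).trans (min_le_left _ _)) ?_)
        exact_mod_cast this
      · -- z = (true, true, false): m₃ copies violated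
        have hsat : satClause β
            [(Sum.inr 0, false), (Sum.inr 1, false), (Sum.inr 2, false), (Sum.inr 3, true)]
            = false := by simp [satClause, hβy, h1, h2, h3]
        have : m₃ ≤ numViol ψ β := by
          rw [hψ, numViol_append, numViol_append, numViol_append, numViol_replicate,
            numViol_replicate, numViol_replicate, hsat]
          simp <;> omega
        refine hmin.trans (le_trans ((min_le_right _ _).trans (min_le_right _ _)) ?_)
        exact_mod_cast this
  refine ⟨hpart1, ?_⟩
  intro e1 e2 e3
  set M : ℝ := (φ.length : ℝ) with hM
  have hMnn : (0:ℝ) ≤ M := by positivity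
  have hMpos : (0:ℝ) < M := by
    rcases hMnn.lt_or_eq with h | h
    · exact h
    · exfalso
      have : (1:ℝ) ≤ (m₁ : ℝ) := by exact_mod_cast hm₁
      rw [e1, ← h] at this
      linarith
  have hδ1 : (0:ℝ) < 1 + 3 * δ := by linarith
  have hLlen : ψ.length = φ.length + m₁ + m₂ + m₃ := by
    simp [hψ]
    omega
  have hLeq : ((ψ.length : ℕ) : ℝ) = M * (1 + 3 * δ) := by
    rw [hLlen]
    push_cast
    rw [e1, e2, e3]
    ring
  have hLpos : (0:ℝ) < ((ψ.length : ℕ) : ℝ) := by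
    rw [hLeq]; positivity
  have hc0 : (0:ℝ) ≤ 1 - δ / (1 + 3 * δ) := by
    rw [sub_nonneg, div_le_one hδ1]
    linarith
  apply Real.sSup_le _ hc0
  rintro x ⟨seq, hseq, rfl⟩
  obtain ⟨β, hβmem, hβ⟩ := hpart1 seq hseq
  have hv : δ * M ≤ (numViol ψ β : ℝ) := by
    rw [e1, e2, e3] at hβ
    simpa using hβ
  have hval : val ψ β ≤ 1 - δ / (1 + 3 * δ) := by
    have hsplit := satcount_add_numViol ψ β
    have hsc : ((ψ.filter fun C => satClause β C).length : ℝ)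
        = ((ψ.length : ℕ) : ℝ) - (numViol ψ β : ℝ) := by
      have := congrArg (fun k : ℕ => (k : ℝ)) hsplit
      push_cast at this
      linarith
    rw [val, hsc, div_le_iff₀ hLpos]
    have hcancel : δ / (1 + 3 * δ) * (1 + 3 * δ) = δ := div_mul_cancel₀ δ (ne_of_gt hδ1)
    nlinarith [hv, hLeq, hcancel]
  have hbdd : BddBelow (val ψ '' {α | α ∈ seq}) := by
    refine ⟨0, ?_⟩
    rintro x ⟨γ, _, rfl⟩
    unfold val
    positivity
  exact csInf_le_of_le hbdd ⟨β, hβmem, rfl⟩ hval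
end
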